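/- Let θ ∈ (0, π/2) and let t ∈ ℂ with Re t > 0. Then e^{4 Re t} − |e^{4t} − 1|·sin θ ≥ 1 if and only if |arg(tanh t)| ≤ π/2 − θ. Moreover the same equivalence holds with both inequalities strict: e^{4 Re t} − |e^{4t} − 1|·sin θ > 1 if and only if |arg(tanh t)| < π/2 − θ. -/

import Mathlib

/-- for `θ ∈ (0, π/2)` and `Re t > 0`,
`e^{4 Re t} - |e^{4t} - 1| sin θ ≥ 1 ↔ |arg(tanh t)| ≤ π/2 - θ`, and the same
equivalence with both inequalities strict. -/
theorem boundedness_region_eq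
    (θ : ℝ) (hθ : θ ∈ Set.Ioo 0 (Real.pi / 2)) (t : ℂ) (ht : 0 < t.re) :
    (1 ≤ Real.exp (4 * t.re) - ‖Complex.exp (4 * t) - 1‖ * Real.sin θ ↔
      |Complex.arg (Complex.tanh t)| ≤ Real.pi / 2 - θ) ∧
    (1 < Real.exp (4 * t.re) - ‖Complex.exp (4 * t) - 1‖ * Real.sin θ ↔
      |Complex.arg (Complex.tanh t)| < Real.pi / 2 - θ) := by
  obtain ⟨hθ0, hθ2⟩ := hθ
  set z : ℂ := Complex.exp (2 * t) with hz
  have habsz : ‖z‖ = Real.exp (2 * t.re) := by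
    rw [hz, Complex.norm_exp]
    norm_num [Complex.mul_re]
  have hz1 : 1 < ‖z‖ := by
    rw [habsz]
    have := Real.add_one_le_exp (2 * t.re)
    linarith
  have hzm1 : z - 1 ≠ 0 := by
    intro h
    have : z = 1 := by linear_combination h
    rw [this] at hz1; simp at hz1
  have hzp1 : z + 1 ≠ 0 := by
    intro h
    have : z = -1 := by linear_combination h
    rw [this] at hz1; simp at hz1
  have he : Complex.exp t ≠ 0 := Complex.exp_ne_zero t
  have hzz : z = Complex.exp t * Complex.exp t := by
    rw [hz, ← Complex.exp_add]; ring_nf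
  -- tanh t = (z - 1) / (z + 1)
  have hcosh_eq : Complex.exp t * (2 * Complex.cosh t) = z + 1 := by
    simp only [Complex.cosh, Complex.exp_neg, hzz]
    field_simp
  have hsinh_eq : Complex.exp t * (2 * Complex.sinh t) = z - 1 := by
    simp only [Complex.sinh, Complex.exp_neg, hzz]
    field_simp
  have htanh : Complex.tanh t = (z - 1) / (z + 1) := by
    rw [Complex.tanh_eq_sinh_div_cosh, ← hsinh_eq, ← hcosh_eq,
      mul_div_mul_left _ _ he, mul_div_mul_left _ _ (two_ne_zero)]
  have htanh_ne : Complex.tanh t ≠ 0 := by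
    rw [htanh]
    exact div_ne_zero hzm1 hzp1
  set a : ℝ := ‖z - 1‖ with ha
  set b : ℝ := ‖z + 1‖ with hb
  have ha0 : 0 < a := by rw [ha]; exact norm_pos_iff.mpr hzm1
  have hb0 : 0 < b := by rw [hb]; exact norm_pos_iff.mpr hzp1
  set E : ℝ := Real.exp (4 * t.re) with hE
  have hnormsqz : Complex.normSq z = E := by
    rw [← Complex.sq_norm, habsz, sq, ← Real.exp_add, hE]
    ring_nf
  have hE1 : 1 < E := by
    have := Real.add_one_le_exp (4 * t.re)
    rw [hE]; linarith
  -- real part of tanh t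
  have hre : (Complex.tanh t).re = (E - 1) / Complex.normSq (z + 1) := by
    have hN : Complex.normSq (z + 1) ≠ 0 := (Complex.normSq_pos.mpr hzp1).ne'
    rw [htanh, Complex.div_re, ← hnormsqz]
    field_simp [Complex.normSq_apply]
    simp only [Complex.sub_re, Complex.sub_im, Complex.add_re, Complex.add_im, Complex.one_re, Complex.one_im, Complex.normSq_apply]
    ring
  have habsw : ‖Complex.tanh t‖ = a / b := by
    rw [htanh, norm_div, ha, hb]
  -- cos of the argument
  have hcos : Real.cos (Complex.arg (Complex.tanh t)) = (E - 1) / (a * b) := by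
    rw [Complex.cos_arg htanh_ne, hre, habsw]
    have hb2 : Complex.normSq (z + 1) = b ^ 2 := by
      rw [← Complex.sq_norm, hb]
    rw [hb2]
    field_simp
  -- |e^{4t} - 1| = a * b
  have habs4 : ‖Complex.exp (4 * t) - 1‖ = a * b := by
    have h4 : Complex.exp (4 * t) = z * z := by
      rw [hz, ← Complex.exp_add]; ring_nf
    have : Complex.exp (4 * t) - 1 = (z - 1) * (z + 1) := by
      rw [h4]; ring
    rw [this, norm_mul, ha, hb]
  have hcosabs : Real.cos |Complex.arg (Complex.tanh t)| = (E - 1) / (a * b) := by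
    rw [Real.cos_abs, hcos]
  have hAmem : Real.pi / 2 - θ ∈ Set.Icc 0 Real.pi := by
    constructor <;> [linarith; linarith [Real.pi_pos]]
  have hBmem : |Complex.arg (Complex.tanh t)| ∈ Set.Icc 0 Real.pi :=
    ⟨abs_nonneg _, Complex.abs_arg_le_pi _⟩
  have hsin : Real.cos (Real.pi / 2 - θ) = Real.sin θ := Real.cos_pi_div_two_sub θ
  have hab0 : 0 < a * b := mul_pos ha0 hb0
  constructor
  · rw [habs4]
    have h1 : |Complex.arg (Complex.tanh t)| ≤ Real.pi / 2 - θ ↔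
        Real.sin θ ≤ (E - 1) / (a * b) := by
      rw [← hsin, ← hcosabs]
      exact (Real.strictAntiOn_cos.le_iff_ge hAmem hBmem).symm
    rw [h1, le_div_iff₀ hab0]
    constructor <;> intro h <;> nlinarith
  · rw [habs4]
    have h1 : |Complex.arg (Complex.tanh t)| < Real.pi / 2 - θ ↔
        Real.sin θ < (E - 1) / (a * b) := by
      rw [← hsin, ← hcosabs]
      exact (Real.strictAntiOn_cos.lt_iff_gt hAmem hBmem).symm
    rw [h1, lt_div_iff₀ hab0]
    constructor <;> intro h <;> nlinarith
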